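/- Let X be a random variable taking values in a finite set 𝒳 with distribution P_X and Rényi entropy of second order R(X) = −log₂ Σ_{x∈𝒳} P_X(x)². Let 𝒢 be a universal class of hash functions 𝒳 → {0,1}^r, let G be uniformly distributed on 𝒢 and independent of X, and set Q = G(X). Then H(Q|G) ≥ r − log₂(1 + 2^{r − R(X)}) ≥ r − 2^{r − R(X)} / ln 2, where H(Q|G) is the conditional Shannon entropy with base-2 logarithm. -/

import Mathlib

open scoped BigOperators

/-- A family of hash functions `𝒳 → {0,1}^r` indexed by a finite type `G` is a
universal class: for any `x₁ ≠ x₂`, a uniformly chosen member collides on them with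
probability at most `1/2^r`. -/
def IsUniversalClass {X G : Type*} [Fintype G] [DecidableEq X] (r : ℕ)
    (hash : G → X → Fin r → ZMod 2) : Prop :=
  ∀ x₁ x₂ : X, x₁ ≠ x₂ →
    ((Finset.univ.filter fun g => hash g x₁ = hash g x₂).card : ℝ) / Fintype.card G ≤
      ((2 : ℝ) ^ r)⁻¹

/-- The Rényi entropy of second order `R(X) = -log₂ Σ_x P_X(x)²`. -/
noncomputable def renyi2 {X : Type*} [Fintype X] (P : X → ℝ) : ℝ :=
  -Real.logb 2 (∑ x, P x ^ 2)

/-- The conditional Shannon entropy (base 2) `H(Q|G)` of `Q = G(X)` given the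
uniformly chosen hash function `G`, for `X` distributed according to `P` and
independent of `G`. -/
noncomputable def condEntHash {X G : Type*} [Fintype X] [Fintype G] [DecidableEq X]
    (r : ℕ) (hash : G → X → Fin r → ZMod 2) (P : X → ℝ) : ℝ :=
  ∑ g, (Fintype.card G : ℝ)⁻¹ *
    ∑ q : Fin r → ZMod 2,
      -((∑ x ∈ Finset.univ.filter fun x => hash g x = q, P x) *
        Real.logb 2 (∑ x ∈ Finset.univ.filter fun x => hash g x = q, P x))

/-- Jensen for log: weighted sum of logs ≤ log of weighted sum. -/
lemma jensen_log' {ι : Type*} (s : Finset ι) (w x : ι → ℝ)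
    (hw : ∀ i ∈ s, 0 ≤ w i) (hw1 : ∑ i ∈ s, w i = 1)
    (hx : ∀ i ∈ s, w i ≠ 0 → 0 < x i) :
    ∑ i ∈ s, w i * Real.log (x i) ≤ Real.log (∑ i ∈ s, w i * x i) := by
  classical
  set t := s.filter (fun i => w i ≠ 0) with ht
  have hsub : ∀ f : ι → ℝ, (∀ i, w i = 0 → w i * f i = 0) →
      ∑ i ∈ t, w i * f i = ∑ i ∈ s, w i * f i := by
    intro f hf
    refine Finset.sum_filter_of_ne ?_
    intro i _ hne hw0
    exact hne (hf i hw0)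
  have h1 : ∑ i ∈ t, w i = 1 := by
    rw [← hw1]
    refine Finset.sum_filter_of_ne ?_
    intro i _ hne; exact hne
  have key := strictConcaveOn_log_Ioi.concaveOn.le_map_sum
    (t := t) (w := w) (p := x)
    (fun i hi => hw i (Finset.mem_filter.mp hi).1) h1
    (fun i hi => hx i (Finset.mem_filter.mp hi).1 (Finset.mem_filter.mp hi).2)
  simp only [smul_eq_mul] at key
  calc ∑ i ∈ s, w i * Real.log (x i) = ∑ i ∈ t, w i * Real.log (x i) := by
        rw [hsub]; intro i h0; rw [h0, zero_mul]
    _ ≤ Real.log (∑ i ∈ t, w i * x i) := key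
    _ = Real.log (∑ i ∈ s, w i * x i) := by
        rw [hsub]; intro i h0; rw [h0, zero_mul]

/-- Shannon entropy (in nats) is at least collision entropy. -/
lemma shannon_ge_collision {ι : Type*} (s : Finset ι) (p : ι → ℝ)
    (hp : ∀ i ∈ s, 0 ≤ p i) (hp1 : ∑ i ∈ s, p i = 1) :
    -Real.log (∑ i ∈ s, p i ^ 2) ≤ ∑ i ∈ s, -(p i * Real.log (p i)) := by
  have h := jensen_log' s p p hp hp1
    (fun i hi hne => lt_of_le_of_ne (hp i hi) (Ne.symm hne))
  have h2 : ∑ i ∈ s, p i * p i = ∑ i ∈ s, p i ^ 2 := by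
    simp [sq]
  rw [h2] at h
  have h3 := neg_le_neg h
  rw [← Finset.sum_neg_distrib] at h3
  exact h3

/-- **Generalized privacy amplification** (Theorem 3 of Bennett–Brassard–Crépeau–
Maurer): if `X` has distribution `P` with second-order Rényi entropy `R(X)`, `G` is a
uniformly chosen member of a universal class of hash functions `𝒳 → {0,1}^r`
independent of `X`, and `Q = G(X)`, then
`H(Q|G) ≥ r - log₂(1 + 2^{r - R(X)}) ≥ r - 2^{r - R(X)} / ln 2`. -/
theorem privacy_amplification {X G : Type*} [Fintype X] [Fintype G] [DecidableEq X]
    [Nonempty G] (P : X → ℝ) (hP0 : ∀ x, 0 ≤ P x) (hP1 : ∑ x, P x = 1)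
    (r : ℕ) (hash : G → X → Fin r → ZMod 2) (huniv : IsUniversalClass r hash) :
    (r : ℝ) - Real.logb 2 (1 + 2 ^ ((r : ℝ) - renyi2 P)) ≤ condEntHash r hash P ∧
    (r : ℝ) - 2 ^ ((r : ℝ) - renyi2 P) / Real.log 2 ≤
      (r : ℝ) - Real.logb 2 (1 + 2 ^ ((r : ℝ) - renyi2 P)) := by
  classical
  set p : G → (Fin r → ZMod 2) → ℝ :=
    fun g q => ∑ x ∈ Finset.univ.filter fun x => hash g x = q, P x with hp_def
  set c : G → ℝ := fun g => ∑ q, p g q ^ 2 with hc_def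
  set S : ℝ := ∑ x, P x ^ 2 with hS_def
  have hlog2 : (0:ℝ) < Real.log 2 := Real.log_pos (by norm_num)
  have hGpos : (0:ℝ) < (Fintype.card G : ℝ) := by exact_mod_cast Fintype.card_pos
  have hp0 : ∀ g q, 0 ≤ p g q := fun g q => Finset.sum_nonneg fun x _ => hP0 x
  have hp1 : ∀ g, ∑ q, p g q = 1 := fun g => by
    rw [hp_def]; rw [Finset.sum_fiberwise]; exact hP1
  have hSpos : 0 < S := by
    have hx : ∃ x : X, P x ≠ 0 := by
      by_contra h
      push_neg at h
      simp [h] at hP1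
    obtain ⟨x, hx⟩ := hx
    calc (0:ℝ) < P x ^ 2 := by positivity
      _ ≤ S := Finset.single_le_sum (f := fun x => P x ^ 2)
          (fun x _ => by positivity) (Finset.mem_univ x)
  have hcpos : ∀ g, 0 < c g := by
    intro g
    have hq : ∃ q, p g q ≠ 0 := by
      by_contra h
      push_neg at h
      have h1 := hp1 g
      simp [h] at h1
    obtain ⟨q, hq⟩ := hq
    calc (0:ℝ) < p g q ^ 2 := by positivity
      _ ≤ c g := Finset.single_le_sum (f := fun q => p g q ^ 2)
          (fun q _ => by positivity) (Finset.mem_univ q)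
  -- collision identity
  have hcoll : ∀ g, c g = ∑ x₁, ∑ x₂,
      if hash g x₁ = hash g x₂ then P x₁ * P x₂ else 0 := by
    intro g
    have e1 : ∀ q, p g q = ∑ x, if hash g x = q then P x else 0 := by
      intro q; simp only [hp_def]; exact Finset.sum_filter _ _
    calc c g = ∑ q, ∑ x₁, ∑ x₂, (if hash g x₁ = q then P x₁ else 0) *
          (if hash g x₂ = q then P x₂ else 0) := by
          refine Finset.sum_congr rfl fun q _ => ?_
          rw [show p g q ^ 2 = p g q * p g q from sq (p g q), e1, Finset.sum_mul_sum]
      _ = ∑ x₁, ∑ x₂, ∑ q, (if hash g x₁ = q then P x₁ else 0) *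
          (if hash g x₂ = q then P x₂ else 0) := by
          rw [Finset.sum_comm]
          exact Finset.sum_congr rfl fun x₁ _ => Finset.sum_comm
      _ = ∑ x₁, ∑ x₂, if hash g x₁ = hash g x₂ then P x₁ * P x₂ else 0 := by
          refine Finset.sum_congr rfl fun x₁ _ => Finset.sum_congr rfl fun x₂ _ => ?_
          have hterm : ∀ q : Fin r → ZMod 2, (if hash g x₁ = q then P x₁ else 0) *
              (if hash g x₂ = q then P x₂ else 0)
              = if q = hash g x₁ then
                  (if hash g x₁ = hash g x₂ then P x₁ * P x₂ else 0) else 0 := by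
            intro q
            rcases eq_or_ne (hash g x₁) q with h1 | h1
            · subst h1
              rcases eq_or_ne (hash g x₁) (hash g x₂) with h2 | h2
              · simp [← h2]
              · simp [h2, Ne.symm h2]
            · simp [h1, Ne.symm h1]
          rw [Finset.sum_congr rfl fun q _ => hterm q, Finset.sum_ite_eq']
          simp
  -- average collision probability bound
  have havg : ∑ g, (Fintype.card G : ℝ)⁻¹ * c g ≤ S + ((2:ℝ) ^ r)⁻¹ := by
    have step1 : ∑ g, (Fintype.card G : ℝ)⁻¹ * c g
        = ∑ x₁, ∑ x₂, (Fintype.card G : ℝ)⁻¹ *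
            ((Finset.univ.filter fun g => hash g x₁ = hash g x₂).card : ℝ) *
            (P x₁ * P x₂) := by
      calc ∑ g, (Fintype.card G : ℝ)⁻¹ * c g
          = ∑ g, ∑ x₁, ∑ x₂, (Fintype.card G : ℝ)⁻¹ *
              (if hash g x₁ = hash g x₂ then P x₁ * P x₂ else 0) := by
            refine Finset.sum_congr rfl fun g _ => ?_
            rw [hcoll g, Finset.mul_sum]
            exact Finset.sum_congr rfl fun x₁ _ => Finset.mul_sum _ _ _
        _ = ∑ x₁, ∑ x₂, ∑ g, (Fintype.card G : ℝ)⁻¹ *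
              (if hash g x₁ = hash g x₂ then P x₁ * P x₂ else 0) := by
            rw [Finset.sum_comm]
            exact Finset.sum_congr rfl fun x₁ _ => Finset.sum_comm
        _ = _ := by
            refine Finset.sum_congr rfl fun x₁ _ => Finset.sum_congr rfl fun x₂ _ => ?_
            rw [← Finset.mul_sum, ← Finset.sum_filter, Finset.sum_const,
              nsmul_eq_mul, mul_assoc]
    rw [step1]
    have hsplit : ∀ x₁ : X, ∑ x₂, (Fintype.card G : ℝ)⁻¹ *
        ((Finset.univ.filter fun g => hash g x₁ = hash g x₂).card : ℝ) * (P x₁ * P x₂)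
        ≤ P x₁ ^ 2 + ∑ x₂ ∈ Finset.univ.erase x₁, ((2:ℝ) ^ r)⁻¹ * (P x₁ * P x₂) := by
      intro x₁
      rw [← Finset.add_sum_erase _ _ (Finset.mem_univ x₁)]
      have hdiag : (Fintype.card G : ℝ)⁻¹ *
          ((Finset.univ.filter fun g => hash g x₁ = hash g x₁).card : ℝ) *
          (P x₁ * P x₁) = P x₁ ^ 2 := by
        have hfil : (Finset.univ.filter fun g : G => hash g x₁ = hash g x₁)
            = Finset.univ := by simp
        rw [hfil, Finset.card_univ, inv_mul_cancel₀ (ne_of_gt hGpos), one_mul, sq]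
      rw [hdiag]
      refine add_le_add le_rfl (Finset.sum_le_sum fun x₂ hx₂ => ?_)
      have hne : x₁ ≠ x₂ := fun h => (Finset.mem_erase.mp hx₂).1 h.symm
      have hb := huniv x₁ x₂ hne
      rw [div_eq_inv_mul] at hb
      have hPP : 0 ≤ P x₁ * P x₂ := mul_nonneg (hP0 x₁) (hP0 x₂)
      exact mul_le_mul_of_nonneg_right (by rw [mul_comm] at hb ⊢; exact hb) hPP
    calc ∑ x₁, ∑ x₂, (Fintype.card G : ℝ)⁻¹ *
          ((Finset.univ.filter fun g => hash g x₁ = hash g x₂).card : ℝ) * (P x₁ * P x₂)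
        ≤ ∑ x₁, (P x₁ ^ 2 + ∑ x₂ ∈ Finset.univ.erase x₁, ((2:ℝ) ^ r)⁻¹ * (P x₁ * P x₂)) :=
          Finset.sum_le_sum fun x₁ _ => hsplit x₁
      _ = S + ((2:ℝ) ^ r)⁻¹ * ∑ x₁, ∑ x₂ ∈ Finset.univ.erase x₁, P x₁ * P x₂ := by
          rw [Finset.sum_add_distrib, Finset.mul_sum]
          congr 1
          exact Finset.sum_congr rfl fun x₁ _ => (Finset.mul_sum _ _ _).symm
      _ ≤ S + ((2:ℝ) ^ r)⁻¹ * 1 := by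
          refine add_le_add le_rfl (mul_le_mul_of_nonneg_left ?_ (by positivity))
          have h1 : ∑ x₁, ∑ x₂ ∈ Finset.univ.erase x₁, P x₁ * P x₂
              ≤ ∑ x₁, ∑ x₂ : X, P x₁ * P x₂ := by
            refine Finset.sum_le_sum fun x₁ _ => ?_
            refine Finset.sum_le_sum_of_subset_of_nonneg (Finset.erase_subset _ _)
              fun x₂ _ _ => mul_nonneg (hP0 x₁) (hP0 x₂)
          calc ∑ x₁, ∑ x₂ ∈ Finset.univ.erase x₁, P x₁ * P x₂
              ≤ ∑ x₁, ∑ x₂ : X, P x₁ * P x₂ := h1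
            _ = 1 := by rw [← Finset.sum_mul_sum, hP1, one_mul]
      _ = S + ((2:ℝ) ^ r)⁻¹ := by rw [mul_one]
  -- main entropy bound
  have hwsum : ∑ _g : G, (Fintype.card G : ℝ)⁻¹ = 1 := by
    rw [Finset.sum_const, Finset.card_univ, nsmul_eq_mul,
      mul_inv_cancel₀ (ne_of_gt hGpos)]
  have havgpos : 0 < ∑ g, (Fintype.card G : ℝ)⁻¹ * c g :=
    Finset.sum_pos (fun g _ => mul_pos (inv_pos.mpr hGpos) (hcpos g))
      Finset.univ_nonempty
  have hmain : -Real.logb 2 (S + ((2:ℝ) ^ r)⁻¹) ≤ condEntHash r hash P := by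
    have hper : ∀ g : G, -Real.logb 2 (c g) ≤
        ∑ q : Fin r → ZMod 2, -(p g q * Real.logb 2 (p g q)) := by
      intro g
      have h := shannon_ge_collision Finset.univ (p g) (fun q _ => hp0 g q) (hp1 g)
      have heq : ∀ q : Fin r → ZMod 2, -(p g q * Real.logb 2 (p g q))
          = -(p g q * Real.log (p g q)) / Real.log 2 := by
        intro q; rw [Real.logb]; ring
      rw [Finset.sum_congr rfl fun q _ => heq q, ← Finset.sum_div, Real.logb,
        ← neg_div]
      exact div_le_div_of_nonneg_right h hlog2.le
    have hstep : ∑ g, (Fintype.card G : ℝ)⁻¹ * -Real.logb 2 (c g) ≤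
        condEntHash r hash P := by
      rw [condEntHash]
      exact Finset.sum_le_sum fun g _ =>
        mul_le_mul_of_nonneg_left (hper g) (le_of_lt (inv_pos.mpr hGpos))
    refine le_trans ?_ hstep
    have hjen : ∑ g, (Fintype.card G : ℝ)⁻¹ * Real.log (c g) ≤
        Real.log (∑ g, (Fintype.card G : ℝ)⁻¹ * c g) :=
      jensen_log' Finset.univ _ c (fun g _ => le_of_lt (inv_pos.mpr hGpos)) hwsum
        (fun g _ _ => hcpos g)
    have hlogle : Real.log (∑ g, (Fintype.card G : ℝ)⁻¹ * c g) ≤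
        Real.log (S + ((2:ℝ) ^ r)⁻¹) := Real.log_le_log havgpos havg
    have h1 : ∑ g, (Fintype.card G : ℝ)⁻¹ * Real.log (c g) ≤
        Real.log (S + ((2:ℝ) ^ r)⁻¹) := hjen.trans hlogle
    have h2 : -Real.log (S + ((2:ℝ) ^ r)⁻¹) / Real.log 2 ≤
        (∑ g, (Fintype.card G : ℝ)⁻¹ * -Real.log (c g)) / Real.log 2 := by
      apply div_le_div_of_nonneg_right _ hlog2.le
      rw [show ∑ g, (Fintype.card G : ℝ)⁻¹ * -Real.log (c g)
          = -∑ g, (Fintype.card G : ℝ)⁻¹ * Real.log (c g) by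
        rw [← Finset.sum_neg_distrib]
        exact Finset.sum_congr rfl fun g _ => (mul_neg _ _)]
      exact neg_le_neg h1
    calc -Real.logb 2 (S + ((2:ℝ) ^ r)⁻¹)
        = -Real.log (S + ((2:ℝ) ^ r)⁻¹) / Real.log 2 := by rw [Real.logb, neg_div]
      _ ≤ (∑ g, (Fintype.card G : ℝ)⁻¹ * -Real.log (c g)) / Real.log 2 := h2
      _ = ∑ g, (Fintype.card G : ℝ)⁻¹ * (-Real.log (c g) / Real.log 2) := by
          rw [Finset.sum_div]
          exact Finset.sum_congr rfl fun g _ => (mul_div_assoc _ _ _)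
      _ = ∑ g, (Fintype.card G : ℝ)⁻¹ * -Real.logb 2 (c g) := by
          refine Finset.sum_congr rfl fun g _ => ?_
          rw [Real.logb, neg_div]
  -- algebraic identity for the first bound
  have hrpow : (2:ℝ) ^ ((r : ℝ) - renyi2 P) = (2:ℝ) ^ r * S := by
    have hexp : (r:ℝ) - renyi2 P = (r:ℝ) + Real.logb 2 S := by
      rw [renyi2, ← hS_def]; ring
    rw [hexp, Real.rpow_add (by norm_num : (0:ℝ) < 2), Real.rpow_natCast,
      Real.rpow_logb (by norm_num) (by norm_num) hSpos]
  have h2r : (0:ℝ) < (2:ℝ) ^ r := by positivity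
  have hid : (r:ℝ) - Real.logb 2 (1 + 2 ^ ((r:ℝ) - renyi2 P))
      = -Real.logb 2 (S + ((2:ℝ) ^ r)⁻¹) := by
    rw [hrpow]
    have hfac : (1 : ℝ) + 2 ^ r * S = (2:ℝ) ^ r * (S + ((2:ℝ) ^ r)⁻¹) := by
      field_simp; ring
    rw [hfac, Real.logb_mul (ne_of_gt h2r) (ne_of_gt (by positivity)),
      show ((2:ℝ) ^ r) = (2:ℝ) ^ (r:ℝ) from (Real.rpow_natCast 2 r).symm,
      Real.logb_rpow (by norm_num : (0:ℝ) < 2)]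
    · ring
    · norm_num
  constructor
  · rw [hid]; exact hmain
  · have hy : (0:ℝ) < 2 ^ ((r:ℝ) - renyi2 P) :=
      Real.rpow_pos_of_pos (by norm_num) _
    apply sub_le_sub_left
    have hlog : Real.log (1 + 2 ^ ((r:ℝ) - renyi2 P)) ≤ 2 ^ ((r:ℝ) - renyi2 P) := by
      have := Real.log_le_sub_one_of_pos (show (0:ℝ) < 1 + 2 ^ ((r:ℝ) - renyi2 P) by
        positivity)
      linarith
    rw [Real.logb]
    exact div_le_div_of_nonneg_right hlog hlog2.le
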